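/- Let C ⊆ F_{p^w}^n be an [n,k] linear code with dual distance d^⊥ and parity check matrix H with columns h₁,…,h_n. Partition [n] into I₁, I₂, I₃ with |I₁| = |I₂| = n−d^⊥+1. Then for any leakage functions τ⁽ʲ⁾ : F_{p^w} → F_2^μ, SD(τ(C), τ(U_n)) ≤ (1/2)·2^{μ(n−d^⊥+1)}·∑_{(ℓ_j)_{j∈I₃}} max_{β∈F_{p^w}^{n−k}∖{0}} ∏_{j∈I₃} |1̂_{ℓ_j}(⟨β, h_j⟩)|. -/

import Mathlib

open Finset Classical

/-- ω_p = e^{2πi/p}. -/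
noncomputable def omg (p : ℕ) : ℂ := Complex.exp (2 * Real.pi * Complex.I / p)

/-- ω_p^{Tr(x)}, where Tr is the field trace from `K` to `ZMod p`. -/
noncomputable def chr (p : ℕ) [Fact p.Prime] (K : Type*) [Field K] [Algebra (ZMod p) K]
    (x : K) : ℂ := omg p ^ (Algebra.trace (ZMod p) K x).val

/-- Fourier coefficient of the indicator of `A ⊆ K` at `α`. -/
noncomputable def ihat (p : ℕ) [Fact p.Prime] (K : Type*) [Field K] [Fintype K]
    [Algebra (ZMod p) K] (A : Finset K) (α : K) : ℂ :=
  (1 / (Fintype.card K : ℂ)) * ∑ x : K, (if x ∈ A then 1 else 0) * chr p K (α * x)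

open Classical in
/-- Probability that coordinatewise leakage `τ` of a uniform element of `SF ⊆ K^n`
equals `ℓ`. -/
noncomputable def leakProb {K : Type*} [Fintype K] {n μ : ℕ}
    (τ : Fin n → K → (Fin μ → ZMod 2)) (SF : Finset (Fin n → K))
    (ℓ : Fin n → (Fin μ → ZMod 2)) : ℝ :=
  ((SF.filter fun x => ∀ j, τ j (x j) = ℓ j).card : ℝ) / SF.card

set_option linter.unusedSectionVars false

variable (p : ℕ) [Fact p.Prime] (K : Type) [Field K] [Fintype K] [Algebra (ZMod p) K]

lemma omg_prim : IsPrimitiveRoot (omg p) p :=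
  Complex.isPrimitiveRoot_exp p (Fact.out : p.Prime).ne_zero

lemma omg_pow_p : omg p ^ p = 1 := (omg_prim p).pow_eq_one

lemma omg_pow_mod (m : ℕ) : omg p ^ (m % p) = omg p ^ m := by
  conv_rhs => rw [← Nat.div_add_mod m p]
  rw [pow_add, pow_mul, omg_pow_p, one_pow, one_mul]

lemma chr_add (x y : K) : chr p K (x + y) = chr p K x * chr p K y := by
  unfold chr
  rw [map_add, ZMod.val_add, omg_pow_mod, pow_add]

lemma chr_zero : chr p K 0 = 1 := by
  unfold chr; rw [map_zero]; simp

lemma abs_chr (x : K) : ‖chr p K x‖ = 1 := by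
  unfold chr omg
  rw [norm_pow]
  have : (2 * Real.pi * Complex.I / p) = (2 * Real.pi / p : ℝ) * Complex.I := by
    push_cast; ring
  rw [this, Complex.norm_exp_ofReal_mul_I, one_pow]

lemma chr_ne_zero (x : K) : chr p K x ≠ 0 := by
  intro hx
  have := abs_chr p K x
  rw [hx] at this; simp at this

lemma chr_neg (x : K) : chr p K (-x) = (chr p K x)⁻¹ := by
  refine (eq_inv_of_mul_eq_one_left ?_)
  rw [← chr_add, neg_add_cancel, chr_zero]

lemma conj_chr (x : K) : (starRingEnd ℂ) (chr p K x) = chr p K (-x) := by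
  rw [chr_neg, ← Complex.inv_eq_conj (abs_chr p K x)]

lemma chr_eq_one_iff (x : K) : chr p K x = 1 ↔ Algebra.trace (ZMod p) K x = 0 := by
  unfold chr
  rw [(omg_prim p).pow_eq_one_iff_dvd]
  constructor
  · intro hd
    have h0 := Nat.eq_zero_of_dvd_of_lt hd (ZMod.val_lt _)
    exact (ZMod.val_eq_zero _).mp h0
  · intro h; rw [h]; simp

-- translation trick: sum over a finset closed under adding x₀ with Tr⟨x₀⟩ ≠ 0
lemma sum_chr_eq_zero_of_translate {ι : Type*} (S : Finset ι) (f : ι → K)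
    (e : ι ≃ ι) (he : ∀ s, s ∈ S ↔ e s ∈ S)
    (x₀ : K) (hx₀ : Algebra.trace (ZMod p) K x₀ ≠ 0)
    (hf : ∀ s ∈ S, f (e s) = f s + x₀) :
    ∑ s ∈ S, chr p K (f s) = 0 := by
  have key : (chr p K x₀) * ∑ s ∈ S, chr p K (f s) = ∑ s ∈ S, chr p K (f s) := by
    rw [Finset.mul_sum]
    calc ∑ s ∈ S, chr p K x₀ * chr p K (f s)
        = ∑ s ∈ S, chr p K (f (e s)) := by
          refine Finset.sum_congr rfl fun s hs => ?_
          rw [hf s hs, chr_add]; ring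
      _ = ∑ s ∈ S, chr p K (f s) :=
          Finset.sum_equiv e he (fun i _ => rfl)
  have hne : chr p K x₀ ≠ 1 := fun hc => hx₀ ((chr_eq_one_iff p K x₀).mp hc)
  by_contra hS
  exact hne (mul_right_cancel₀ hS (key.trans (one_mul _).symm))

variable {p K}

lemma exists_tr_ne_zero : ∃ x₀ : K, Algebra.trace (ZMod p) K x₀ ≠ 0 := by
  have : FiniteDimensional (ZMod p) K := Module.Finite.of_finite
  obtain ⟨x₀, hx₀⟩ := Algebra.trace_surjective (ZMod p) K 1
  exact ⟨x₀, by rw [hx₀]; exact one_ne_zero⟩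

lemma qC_ne_zero : (Fintype.card K : ℂ) ≠ 0 := by
  exact_mod_cast Fintype.card_ne_zero

lemma sum_chr_mul (α : K) :
    ∑ x : K, chr p K (α * x) = if α = 0 then (Fintype.card K : ℂ) else 0 := by
  split_ifs with hα
  · subst hα; simp [chr_zero]
  · obtain ⟨y₀, hy₀⟩ := exists_tr_ne_zero (p := p) (K := K)
    refine sum_chr_eq_zero_of_translate p K Finset.univ (fun x => α * x)
      (Equiv.addRight (y₀ / α)) (by simp) y₀ hy₀ (fun s _ => ?_)
    simp only [Equiv.coe_addRight]
    field_simp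

lemma ihat_eq (A : Finset K) (α : K) :
    ihat p K A α = (1 / (Fintype.card K : ℂ)) * ∑ x ∈ A, chr p K (α * x) := by
  unfold ihat
  congr 1
  rw [← Finset.sum_filter_of_ne (p := fun x => x ∈ A)]
  · rw [Finset.sum_congr rfl (fun x hx => ?_)]
    · congr 1; ext x; simp
    · rw [if_pos (Finset.mem_filter.mp hx).2, one_mul]
  · intro x _ hx
    by_contra hmem
    exact hx (by rw [if_neg hmem, zero_mul])

lemma inversion (A : Finset K) (x : K) :
    ∑ α : K, ihat p K A α * chr p K (-(α * x)) = if x ∈ A then 1 else 0 := by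
  simp only [ihat_eq, Finset.mul_sum, Finset.sum_mul, mul_assoc]
  rw [Finset.sum_comm]
  have : ∀ t ∈ A, ∑ α : K, 1 / (Fintype.card K : ℂ) * (chr p K (α * t) * chr p K (-(α * x)))
      = if t = x then 1 else 0 := by
    intro t _
    rw [← Finset.mul_sum]
    have : ∀ α : K, chr p K (α * t) * chr p K (-(α * x)) = chr p K ((t - x) * α) := by
      intro α; rw [← chr_add]; ring_nf
    rw [Finset.sum_congr rfl fun α _ => this α, sum_chr_mul]
    split_ifs with h1 h2 h2
    · rw [one_div, inv_mul_cancel₀ qC_ne_zero]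
    · exact absurd (sub_eq_zero.mp h1) h2
    · exact absurd (sub_eq_zero.mpr h2) h1
    · rw [mul_zero]
  rw [Finset.sum_congr rfl this, Finset.sum_ite_eq' A x]

lemma conj_ihat (A : Finset K) (α : K) :
    (starRingEnd ℂ) (ihat p K A α) = (1 / (Fintype.card K : ℂ)) * ∑ y ∈ A, chr p K (-(α * y)) := by
  rw [ihat_eq, map_mul, map_sum]
  congr 1
  · simp
  · exact Finset.sum_congr rfl fun y _ => conj_chr p K _

lemma parseval (A : Finset K) :
    ∑ α : K, ‖ihat p K A α‖^2 = (A.card : ℝ) / Fintype.card K := by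
  have hC : ∑ α : K, ihat p K A α * (starRingEnd ℂ) (ihat p K A α)
      = ((A.card : ℝ) / Fintype.card K : ℝ) := by
    have step : ∀ α : K, ihat p K A α * (starRingEnd ℂ) (ihat p K A α)
        = (1 / (Fintype.card K : ℂ))^2 * ∑ x ∈ A, ∑ y ∈ A, chr p K ((x - y) * α) := by
      intro α
      rw [conj_ihat, ihat_eq]
      rw [mul_mul_mul_comm, ← sq, Finset.sum_mul_sum]
      congr 1
      refine Finset.sum_congr rfl fun x _ => Finset.sum_congr rfl fun y _ => ?_
      rw [← chr_add]; ring_nf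
    rw [Finset.sum_congr rfl fun α _ => step α, ← Finset.mul_sum]
    have inner : ∀ x ∈ A, ∑ y ∈ A, ∑ α : K, chr p K ((x - y) * α)
        = (Fintype.card K : ℂ) := by
      intro x hx
      have : ∀ y ∈ A, ∑ α : K, chr p K ((x - y) * α)
          = if x - y = 0 then (Fintype.card K : ℂ) else 0 := fun y _ => sum_chr_mul _
      rw [Finset.sum_congr rfl this]
      have : ∀ y ∈ A, (if x - y = 0 then (Fintype.card K : ℂ) else 0)
          = if y = x then (Fintype.card K : ℂ) else 0 := by
        intro y _; congr 1
        simp [sub_eq_zero, eq_comm]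
      rw [Finset.sum_congr rfl this, Finset.sum_ite_eq' A x, if_pos hx]
    have swap : ∑ α : K, ∑ x ∈ A, ∑ y ∈ A, chr p K ((x - y) * α)
        = ∑ x ∈ A, ∑ y ∈ A, ∑ α : K, chr p K ((x - y) * α) := by
      rw [Finset.sum_comm]
      exact Finset.sum_congr rfl fun x _ => Finset.sum_comm
    rw [swap, Finset.sum_congr rfl inner, Finset.sum_const, nsmul_eq_mul]
    have hq : (Fintype.card K : ℂ) ≠ 0 := qC_ne_zero
    push_cast
    field_simp
  calc ∑ α : K, ‖ihat p K A α‖^2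
      = ∑ α : K, (ihat p K A α * (starRingEnd ℂ) (ihat p K A α)).re := by
        refine Finset.sum_congr rfl fun α _ => ?_
        rw [Complex.mul_conj, Complex.ofReal_re, ← Complex.sq_norm]
    _ = (∑ α : K, ihat p K A α * (starRingEnd ℂ) (ihat p K A α)).re := by
        rw [Complex.re_sum]
    _ = (A.card : ℝ) / Fintype.card K := by rw [hC, Complex.ofReal_re]

lemma chr_sum {ι : Type*} (s : Finset ι) (f : ι → K) :
    chr p K (∑ j ∈ s, f j) = ∏ j ∈ s, chr p K (f j) := by
  induction s using Finset.cons_induction with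
  | empty => simp [chr_zero]
  | cons a s ha ih => rw [Finset.sum_cons, Finset.prod_cons, chr_add, ih]

variable {n : ℕ} {μ : ℕ}

lemma expand (τ : Fin n → K → (Fin μ → ZMod 2)) (S : Finset (Fin n → K))
    (ℓ : Fin n → (Fin μ → ZMod 2)) :
    ((S.filter fun x => ∀ j, τ j (x j) = ℓ j).card : ℂ)
      = ∑ g : Fin n → K,
          (∏ j, ihat p K (Finset.univ.filter fun u : K => τ j u = ℓ j) (g j)) *
            ∑ x ∈ S, chr p K (-∑ j, g j * x j) := by
  have step1 : ((S.filter fun x => ∀ j, τ j (x j) = ℓ j).card : ℂ)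
      = ∑ x ∈ S, ∏ j, (if x j ∈ (Finset.univ.filter fun u : K => τ j u = ℓ j) then (1:ℂ) else 0) := by
    rw [Finset.card_filter]
    push_cast
    refine Finset.sum_congr rfl fun x _ => ?_
    rw [Finset.prod_boole]
    simp
  rw [step1]
  have step2 : ∀ x ∈ S, (∏ j, (if x j ∈ (Finset.univ.filter fun u : K => τ j u = ℓ j) then (1:ℂ) else 0))
      = ∑ g : Fin n → K, ∏ j, (ihat p K (Finset.univ.filter fun u : K => τ j u = ℓ j) (g j)
          * chr p K (-(g j * x j))) := by
    intro x _
    have fub : ∀ (Fn : Fin n → K → ℂ),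
        (∑ g : Fin n → K, ∏ j, Fn j (g j)) = ∏ j, ∑ α : K, Fn j α := by
      intro Fn
      rw [Finset.prod_univ_sum, Fintype.piFinset_univ]
    rw [fub (fun j v => ihat p K (Finset.univ.filter fun u : K => τ j u = ℓ j) v
          * chr p K (-(v * x j)))]
    exact Finset.prod_congr rfl fun j _ => (inversion _ _).symm
  rw [Finset.sum_congr rfl step2, Finset.sum_comm]
  refine Finset.sum_congr rfl fun g _ => ?_
  rw [Finset.mul_sum]
  refine Finset.sum_congr rfl fun x _ => ?_
  rw [Finset.prod_mul_distrib]
  congr 1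
  rw [← chr_sum]
  congr 1
  rw [← Finset.sum_neg_distrib]

lemma sum_chr_code (C : Submodule K (Fin n → K)) (CF : Finset (Fin n → K))
    (hCF : ∀ x, x ∈ CF ↔ x ∈ C) (g : Fin n → K) :
    ∑ x ∈ CF, chr p K (-∑ j, g j * x j)
      = if (∀ c ∈ C, ∑ i, c i * g i = 0) then (CF.card : ℂ) else 0 := by
  split_ifs with hperp
  · have : ∀ x ∈ CF, chr p K (-∑ j, g j * x j) = 1 := by
      intro x hx
      have h0 : ∑ j, g j * x j = 0 := by
        rw [← hperp x ((hCF x).mp hx)]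
        exact Finset.sum_congr rfl fun j _ => mul_comm _ _
      rw [h0, neg_zero, chr_zero]
    rw [Finset.sum_congr rfl this, Finset.sum_const, nsmul_eq_mul, mul_one]
  · push_neg at hperp
    obtain ⟨c, hcC, hct⟩ := hperp
    obtain ⟨y₀, hy₀⟩ := exists_tr_ne_zero (p := p) (K := K)
    set t := ∑ i, c i * g i with ht
    set c' : Fin n → K := (y₀ / t) • c with hc'
    have hc'C : c' ∈ C := C.smul_mem _ hcC
    have hval : ∑ j, g j * c' j = y₀ := by
      calc ∑ j, g j * c' j = ∑ j, (y₀ / t) * (c j * g j) := by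
            refine Finset.sum_congr rfl fun j _ => ?_
            rw [hc']
            simp only [Pi.smul_apply, smul_eq_mul]
            ring
        _ = (y₀ / t) * t := by rw [← Finset.mul_sum, ← ht]
        _ = y₀ := by field_simp
    refine sum_chr_eq_zero_of_translate p K CF (fun x => -∑ j, g j * x j)
      (Equiv.addRight c') (fun x => ?_) (-y₀) (by simpa using hy₀) (fun x _ => ?_)
    · constructor
      · intro hx
        exact (hCF _).mpr (C.add_mem ((hCF x).mp hx) hc'C)
      · intro hx
        have := C.sub_mem ((hCF _).mp hx) hc'C
        simpa using (hCF _).mpr this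
    · simp only [Equiv.coe_addRight]
      have hsum : ∑ j, g j * (x + c') j = (∑ j, g j * x j) + y₀ := by
        rw [← hval, ← Finset.sum_add_distrib]
        refine Finset.sum_congr rfl fun j _ => ?_
        simp only [Pi.add_apply]
        ring
      rw [hsum]
      ring

open Module in
lemma phi_inj (k : ℕ) (C : Submodule K (Fin n → K)) (hk : finrank K C = k) (hkn : k ≤ n)
    (h : Fin n → Fin (n-k) → K)
    (hH : ∀ y : Fin n → K, (∀ c ∈ C, ∑ i, c i * y i = 0) ↔
      ∃ β : Fin (n - k) → K, y = fun j => ∑ i, β i * h j i) :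
    Function.Injective (fun β : Fin (n-k) → K => (fun j => ∑ i, β i * h j i : Fin n → K)) := by
  classical
  set B : LinearMap.BilinForm K (Fin n → K) := LinearMap.mk₂ K (fun x y => ∑ i, x i * y i)
    (by intros m₁ m₂ nn; simp [add_mul, Finset.sum_add_distrib])
    (by intros c m nn; simp [Finset.mul_sum, mul_assoc])
    (by intros m n₁ n₂; simp [mul_add, Finset.sum_add_distrib])
    (by intros c m nn; simp [Finset.mul_sum, mul_assoc, mul_left_comm]) with hB
  have hBapp : ∀ x y : Fin n → K, B x y = ∑ i, x i * y i := fun x y => rfl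
  have hrefl : B.IsRefl := by
    intro x y hxy
    rw [hBapp] at hxy ⊢
    rw [← hxy]
    exact Finset.sum_congr rfl fun i _ => mul_comm _ _
  have hnd : B.Nondegenerate := by
    refine ⟨fun x hx => ?_, fun x hx => ?_⟩
    · funext j
      have := hx (Pi.single j 1)
      rw [hBapp] at this
      simpa [Pi.single_apply, mul_ite, Finset.sum_ite_eq'] using this
    · funext j
      have := hx (Pi.single j 1)
      rw [hBapp] at this
      simpa [Pi.single_apply, ite_mul, Finset.sum_ite_eq'] using this
  set φ : (Fin (n-k) → K) →ₗ[K] (Fin n → K) :=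
    { toFun := fun β => fun j => ∑ i, β i * h j i
      map_add' := by intros a b; funext j; simp [add_mul, Finset.sum_add_distrib]
      map_smul' := by intros c a; funext j; simp [Finset.mul_sum, mul_assoc] } with hφ
  have hrange : LinearMap.range φ = B.orthogonal C := by
    ext y
    rw [LinearMap.mem_range, LinearMap.BilinForm.mem_orthogonal_iff]
    constructor
    · rintro ⟨β, rfl⟩ c hc
      have := (hH (φ β)).mpr ⟨β, rfl⟩ c hc
      rwa [hBapp]
    · intro hy
      obtain ⟨β, hβ⟩ := (hH y).mp (fun c hc => by rw [← hBapp]; exact hy c hc)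
      exact ⟨β, hβ.symm⟩
  have hfr : finrank K (LinearMap.range φ) = n - k := by
    rw [hrange, LinearMap.BilinForm.finrank_orthogonal hnd, hk]
    congr 1
    rw [Module.finrank_pi, Fintype.card_fin]
  have hrn := LinearMap.finrank_range_add_finrank_ker φ
  rw [hfr, Module.finrank_pi, Fintype.card_fin] at hrn
  have hker0 : finrank K (LinearMap.ker φ) = 0 := by omega
  have : LinearMap.ker φ = ⊥ := Submodule.finrank_eq_zero.mp hker0
  exact LinearMap.ker_eq_bot.mp this

open Module in
lemma restr_inj (k dperp : ℕ) (C : Submodule K (Fin n → K)) (hk : finrank K C = k) (hkn : k ≤ n)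
    (h : Fin n → Fin (n-k) → K)
    (hH : ∀ y : Fin n → K, (∀ c ∈ C, ∑ i, c i * y i = 0) ↔
      ∃ β : Fin (n - k) → K, y = fun j => ∑ i, β i * h j i)
    (hdperp : ∀ y : Fin n → K, (∀ c ∈ C, ∑ i, c i * y i = 0) → y ≠ 0 →
      dperp ≤ hammingNorm y)
    (I : Finset (Fin n)) (hI : I.card = n - dperp + 1) :
    Function.Injective
      (fun β : Fin (n-k) → K => (fun j : {j // j ∈ I} => ∑ i, β i * h j.val i)) := by
  intro β₁ β₂ hr
  by_contra hne
  set y : Fin n → K := fun j => ∑ i, (β₁ - β₂) i * h j i with hy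
  have hyD : ∀ c ∈ C, ∑ i, c i * y i = 0 := (hH y).mpr ⟨β₁ - β₂, rfl⟩
  have hyne : y ≠ 0 := by
    intro h0
    apply hne
    apply sub_eq_zero.mp
    apply phi_inj k C hk hkn h hH
    show y = fun j => ∑ i : Fin (n - k), (0 : Fin (n-k) → K) i * h j i
    rw [h0]
    funext j
    simp
  have hwt := hdperp y hyD hyne
  have hzero : ∀ j ∈ I, y j = 0 := by
    intro j hj
    have := congrFun hr ⟨j, hj⟩
    simp only at this
    rw [hy]
    simp only [Pi.sub_apply, sub_mul, Finset.sum_sub_distrib]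
    rw [this]
    ring
  have hsub : (Finset.univ.filter fun j => y j ≠ 0) ⊆ Finset.univ \ I := by
    intro j hj
    rw [Finset.mem_filter] at hj
    rw [Finset.mem_sdiff]
    exact ⟨Finset.mem_univ j, fun hjI => hj.2 (hzero j hjI)⟩
  have hcard : hammingNorm y ≤ n - I.card := by
    have := Finset.card_le_card hsub
    rwa [Finset.card_sdiff_of_subset (Finset.subset_univ I), Finset.card_univ, Fintype.card_fin] at this
  have hIn : I.card ≤ n := by
    simpa using Finset.card_le_card (Finset.subset_univ I)
  omega


lemma abs_ihat_le_one (A : Finset K) (α : K) : ‖ihat p K A α‖ ≤ 1 := by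
  rw [ihat_eq, norm_mul]
  have h1 : ‖∑ x ∈ A, chr p K (α * x)‖ ≤ A.card := by
    calc ‖∑ x ∈ A, chr p K (α * x)‖ ≤ ∑ x ∈ A, ‖chr p K (α * x)‖ :=
          norm_sum_le _ _
      _ = A.card := by
          rw [Finset.sum_congr rfl fun x _ => abs_chr p K (α * x), Finset.sum_const,
            nsmul_eq_mul, mul_one]
  have h2 : ‖1 / (Fintype.card K : ℂ)‖ = 1 / (Fintype.card K : ℝ) := by
    rw [norm_div, norm_one]
    congr 1
    exact Complex.norm_natCast _
  rw [h2]
  have hq : (0:ℝ) < (Fintype.card K : ℝ) := by positivity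
  rw [div_mul_eq_mul_div, one_mul, div_le_one hq]
  calc ‖∑ x ∈ A, chr p K (α * x)‖ ≤ A.card := h1
    _ ≤ (Fintype.card K : ℝ) := by exact_mod_cast Finset.card_le_univ A

lemma fubG {ι X M : Type*} [Fintype ι] [DecidableEq ι] [Fintype X] [CommSemiring M]
    (Fn : ι → X → M) :
    ∑ g : ι → X, ∏ j, Fn j (g j) = ∏ j, ∑ v, Fn j v := by
  rw [Finset.prod_univ_sum, Fintype.piFinset_univ]

lemma sum_chr_univ_vec (g : Fin n → K) :
    ∑ x : Fin n → K, chr p K (-∑ j, g j * x j)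
      = if g = 0 then ((Fintype.card K : ℂ))^n else 0 := by
  have e1 : ∀ x : Fin n → K, chr p K (-∑ j, g j * x j) = ∏ j, chr p K ((-g j) * x j) := by
    intro x
    rw [← chr_sum]
    congr 1
    rw [← Finset.sum_neg_distrib]
    exact Finset.sum_congr rfl fun j _ => by ring
  rw [Finset.sum_congr rfl fun x _ => e1 x,
    fubG (fun j v => chr p K ((-g j) * v)),
    Finset.prod_congr rfl fun j (_ : j ∈ Finset.univ) => sum_chr_mul (-g j)]
  by_cases hg : g = 0
  · subst hg
    rw [if_pos rfl]
    rw [Finset.prod_congr rfl fun j (_ : j ∈ Finset.univ) => if_pos (by simp)]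
    rw [Finset.prod_const, Finset.card_univ, Fintype.card_fin]
  · rw [if_neg hg]
    obtain ⟨j₀, hj₀⟩ := Function.ne_iff.mp hg
    refine Finset.prod_eq_zero (Finset.mem_univ j₀) ?_
    rw [if_neg]
    simpa using hj₀

lemma sqrt_prod {ι : Type*} (s : Finset ι) (f : ι → ℝ) (hf : ∀ i ∈ s, 0 ≤ f i) :
    Real.sqrt (∏ i ∈ s, f i) = ∏ i ∈ s, Real.sqrt (f i) := by
  induction s using Finset.cons_induction with
  | empty => simp
  | cons a s ha ih =>
    rw [Finset.prod_cons, Finset.prod_cons,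
      Real.sqrt_mul (hf a (Finset.mem_cons_self a s)),
      ih (fun i hi => hf i (Finset.mem_cons_of_mem hi))]

lemma sum_comp_inj_le {A B : Type*} [Fintype B] (s : Finset A) (r : A → B)
    (hr : Function.Injective r) (g : B → ℝ) (hg : ∀ b, 0 ≤ g b) :
    ∑ a ∈ s, g (r a) ≤ ∑ b : B, g b := by
  classical
  rw [← Finset.sum_image (f := g) (g := r) (fun x _ y _ hxy => hr hxy)]
  exact Finset.sum_le_sum_of_subset_of_nonneg (Finset.subset_univ _) (fun b _ _ => hg b)



set_option maxHeartbeats 2000000 in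
open Module in
/-- with `H` a parity-check matrix of `C` (columns `h j`), and
`[n]` partitioned into `I₁, I₂, I₃` with `|I₁| = |I₂| = n − d^⊥ + 1`,
`SD(τ(C),τ(U_n)) ≤ (1/2)·2^{μ(n−d^⊥+1)}·∑_{(ℓ_j)_{j∈I₃}} max_{β≠0} ∏_{j∈I₃}
|1̂_{ℓ_j}(⟨β,h_j⟩)|`. -/
theorem stmt14 (p w n k μ dperp : ℕ) [Fact p.Prime] (hw : 1 ≤ w)
    (K : Type) [Field K] [Fintype K] [Algebra (ZMod p) K]
    (hK : Fintype.card K = p ^ w)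
    (C : Submodule K (Fin n → K)) (hk : Module.finrank K C = k) (hkn : k ≤ n)
    (CF : Finset (Fin n → K)) (hCF : ∀ x, x ∈ CF ↔ x ∈ C)
    (h : Fin n → (Fin (n - k) → K))
    (hH : ∀ y : Fin n → K, (∀ c ∈ C, ∑ i, c i * y i = 0) ↔
      ∃ β : Fin (n - k) → K, y = fun j => ∑ i, β i * h j i)
    (hdperp : ∀ y : Fin n → K, (∀ c ∈ C, ∑ i, c i * y i = 0) → y ≠ 0 →
      dperp ≤ hammingNorm y)
    (I₁ I₂ I₃ : Finset (Fin n))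
    (h12 : Disjoint I₁ I₂) (h13 : Disjoint I₁ I₃) (h23 : Disjoint I₂ I₃)
    (hcover : I₁ ∪ I₂ ∪ I₃ = Finset.univ)
    (hI₁ : I₁.card = n - dperp + 1) (hI₂ : I₂.card = n - dperp + 1)
    (τ : Fin n → K → (Fin μ → ZMod 2)) :
    (1 / 2 : ℝ) * ∑ ℓ : Fin n → (Fin μ → ZMod 2),
        |leakProb τ CF ℓ - leakProb τ Finset.univ ℓ|
      ≤ (1 / 2 : ℝ) * (2 : ℝ) ^ (μ * (n - dperp + 1)) *
          ∑ ℓ : {j // j ∈ I₃} → (Fin μ → ZMod 2),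
            ⨆ β : {b : Fin (n - k) → K // b ≠ 0},
              ∏ j : {j // j ∈ I₃},
                ‖ihat p K
                  (Finset.univ.filter fun x : K => τ j.val x = ℓ j)
                  (∑ i, β.val i * h j.val i)‖ := by
  classical
  -- abbreviations
  set a : Fin n → (Fin μ → ZMod 2) → Finset K := fun j v => Finset.univ.filter fun x : K => τ j x = v with ha
  set yv : (Fin (n - k) → K) → Fin n → K := fun β => fun j => ∑ i, β i * h j i with hyv
  set F : Fin n → (Fin μ → ZMod 2) → K → ℝ := fun j v α => ‖ihat p K (a j v) α‖ with hFdef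
  set Bs : Finset (Fin (n - k) → K) := Finset.univ.filter (fun b => b ≠ 0) with hBs
  set T : ({j // j ∈ I₃} → (Fin μ → ZMod 2)) → ℝ := fun ℓ₃ =>
    ⨆ β : {b : Fin (n - k) → K // b ≠ 0},
      ∏ j : {j // j ∈ I₃}, F j.val (ℓ₃ j) (yv β.val j.val) with hT
  have hq0 : (0:ℝ) < (Fintype.card K : ℝ) := by positivity
  have hFnn : ∀ j v α, 0 ≤ F j v α := fun j v α => norm_nonneg _
  have hFle1 : ∀ j v α, F j v α ≤ 1 := fun j v α => abs_ihat_le_one _ _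
  -- Step A
  have stepA : ∀ ℓ : Fin n → (Fin μ → ZMod 2), |leakProb τ CF ℓ - leakProb τ Finset.univ ℓ|
      ≤ ∑ β ∈ Bs, ∏ j, F j (ℓ j) (yv β j) := by
    intro ℓ
    have id1 : ((CF.filter fun x => ∀ j, τ j (x j) = ℓ j).card : ℂ)
        = (CF.card : ℂ) * ∑ β : Fin (n - k) → K, ∏ j, ihat p K (a j (ℓ j)) (yv β j) := by
      calc ((CF.filter fun x => ∀ j, τ j (x j) = ℓ j).card : ℂ)
          = ∑ g : Fin n → K, (∏ j, ihat p K (a j (ℓ j)) (g j)) *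
              ∑ x ∈ CF, chr p K (-∑ j, g j * x j) := expand τ CF ℓ
        _ = ∑ g ∈ Finset.univ.filter (fun g : Fin n → K => ∀ c ∈ C, ∑ i, c i * g i = 0),
              (CF.card : ℂ) * ∏ j, ihat p K (a j (ℓ j)) (g j) := by
            rw [Finset.sum_filter]
            refine Finset.sum_congr rfl fun g _ => ?_
            rw [sum_chr_code C CF hCF g]
            split_ifs <;> ring
        _ = ∑ β : Fin (n - k) → K, (CF.card : ℂ) * ∏ j, ihat p K (a j (ℓ j)) (yv β j) := by
            refine (Finset.sum_nbij yv ?_ ?_ ?_ ?_).symm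
            · intro β _
              rw [Finset.mem_filter]
              exact ⟨Finset.mem_univ _, (hH (yv β)).mpr ⟨β, rfl⟩⟩
            · intro β₁ _ β₂ _ hβ
              exact phi_inj k C hk hkn h hH hβ
            · intro g hg
              rw [Finset.coe_filter, Set.mem_setOf_eq] at hg
              obtain ⟨β, hβ⟩ := (hH g).mp hg.2
              exact ⟨β, by simp, hβ.symm⟩
            · intro β _; rfl
        _ = (CF.card : ℂ) * ∑ β : Fin (n - k) → K, ∏ j, ihat p K (a j (ℓ j)) (yv β j) := by
            rw [Finset.mul_sum]
    have id2 : (((Finset.univ : Finset (Fin n → K)).filter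
          fun x => ∀ j, τ j (x j) = ℓ j).card : ℂ)
        = ((Fintype.card K : ℂ))^n * ∏ j, ihat p K (a j (ℓ j)) 0 := by
      calc (((Finset.univ : Finset (Fin n → K)).filter fun x => ∀ j, τ j (x j) = ℓ j).card : ℂ)
          = ∑ g : Fin n → K, (∏ j, ihat p K (a j (ℓ j)) (g j)) *
              ∑ x : Fin n → K, chr p K (-∑ j, g j * x j) := expand τ Finset.univ ℓ
        _ = ∑ g : Fin n → K, (if g = 0 then (∏ j, ihat p K (a j (ℓ j)) (g j)) *
              ((Fintype.card K : ℂ))^n else 0) := by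
            refine Finset.sum_congr rfl fun g _ => ?_
            rw [sum_chr_univ_vec g]
            split_ifs <;> ring
        _ = ((Fintype.card K : ℂ))^n * ∏ j, ihat p K (a j (ℓ j)) 0 := by
            rw [Finset.sum_ite_eq' Finset.univ (0 : Fin n → K)
              (fun g => (∏ j, ihat p K (a j (ℓ j)) (g j)) * ((Fintype.card K : ℂ))^n)]
            rw [if_pos (Finset.mem_univ _)]
            simp [mul_comm]
    have h0CF : (0 : Fin n → K) ∈ CF := (hCF 0).mpr C.zero_mem
    have hCFc : (CF.card : ℂ) ≠ 0 := by
      have := Finset.card_pos.mpr ⟨(0 : Fin n → K), h0CF⟩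
      exact_mod_cast Nat.pos_iff_ne_zero.mp this
    have hUc : ((Fintype.card K : ℂ))^n ≠ 0 := pow_ne_zero _ qC_ne_zero
    have r1 : ((leakProb τ CF ℓ : ℝ) : ℂ)
        = ∑ β : Fin (n - k) → K, ∏ j, ihat p K (a j (ℓ j)) (yv β j) := by
      unfold leakProb
      rw [Complex.ofReal_div]
      push_cast
      rw [id1, mul_div_cancel_left₀ _ hCFc]
    have r2 : ((leakProb τ (Finset.univ : Finset (Fin n → K)) ℓ : ℝ) : ℂ)
        = ∏ j, ihat p K (a j (ℓ j)) 0 := by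
      unfold leakProb
      rw [Complex.ofReal_div]
      push_cast
      rw [id2]
      rw [Finset.card_univ]
      have : (Fintype.card (Fin n → K) : ℂ) = ((Fintype.card K : ℂ))^n := by
        rw [Fintype.card_fun, Fintype.card_fin]
        push_cast
        ring
      rw [this, mul_div_cancel_left₀ _ hUc]
    have r3 : ((leakProb τ CF ℓ - leakProb τ (Finset.univ : Finset (Fin n → K)) ℓ : ℝ) : ℂ)
        = ∑ β ∈ Bs, ∏ j, ihat p K (a j (ℓ j)) (yv β j) := by
      rw [Complex.ofReal_sub, r1, r2]
      have h0 : (∏ j, ihat p K (a j (ℓ j)) (yv 0 j)) = ∏ j, ihat p K (a j (ℓ j)) 0 := by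
        refine Finset.prod_congr rfl fun j _ => ?_
        congr 1
        simp [hyv]
      have hadd := Finset.add_sum_erase Finset.univ
        (fun β : Fin (n - k) → K => ∏ j, ihat p K (a j (ℓ j)) (yv β j)) (Finset.mem_univ 0)
      have hBe : Bs = Finset.univ.erase (0 : Fin (n - k) → K) := by
        rw [hBs, Finset.filter_ne']
      rw [hBe, ← hadd]
      simp only [h0]
      ring
    have habs : |leakProb τ CF ℓ - leakProb τ (Finset.univ : Finset (Fin n → K)) ℓ|
        = ‖((leakProb τ CF ℓ - leakProb τ (Finset.univ : Finset (Fin n → K)) ℓ : ℝ) : ℂ)‖ :=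
      ((Complex.norm_real _).trans (Real.norm_eq_abs _)).symm
    rw [habs, r3]
    calc ‖∑ β ∈ Bs, ∏ j, ihat p K (a j (ℓ j)) (yv β j)‖
        ≤ ∑ β ∈ Bs, ‖∏ j, ihat p K (a j (ℓ j)) (yv β j)‖ :=
          norm_sum_le _ _
      _ = ∑ β ∈ Bs, ∏ j, F j (ℓ j) (yv β j) := by
          refine Finset.sum_congr rfl fun β _ => ?_
          rw [norm_prod]
  
  -- bounding the I₃ product by the sup
  have hT0 : ∀ ℓ₃, 0 ≤ T ℓ₃ := fun ℓ₃ => Real.iSup_nonneg fun β =>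
    Finset.prod_nonneg fun j _ => hFnn _ _ _
  have hTle : ∀ (ℓ : Fin n → (Fin μ → ZMod 2)) (β : Fin (n - k) → K), β ≠ 0 →
      ∏ j ∈ I₃, F j (ℓ j) (yv β j) ≤ T (fun j => ℓ j.val) := by
    intro ℓ β hβ
    have : ∏ j ∈ I₃, F j (ℓ j) (yv β j)
        = ∏ j : {j // j ∈ I₃}, F j.val (ℓ j.val) (yv β j.val) :=
      (Finset.prod_coe_sort I₃ _).symm
    rw [this]
    exact le_ciSup (f := fun β : {b : Fin (n - k) → K // b ≠ 0} =>
      ∏ j : {j // j ∈ I₃}, F j.val (ℓ j.val) (yv β.val j.val))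
      ⟨1, by rintro x ⟨β', rfl⟩
             exact Finset.prod_le_one (fun j _ => hFnn _ _ _) (fun j _ => hFle1 _ _ _)⟩
      ⟨β, hβ⟩
  -- Parseval-based bound
  have parsebound : ∀ (I : Finset (Fin n)), I.card = n - dperp + 1 → ∀ ℓ : Fin n → (Fin μ → ZMod 2),
      ∑ β ∈ Bs, (∏ j ∈ I, F j (ℓ j) (yv β j))^2
        ≤ ∏ j ∈ I, ((a j (ℓ j)).card / (Fintype.card K : ℝ)) := by
    intro I hI ℓ
    have hinj : Function.Injective
        (fun β : Fin (n - k) → K => (fun j : {j // j ∈ I} => yv β j.val)) :=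
      restr_inj k dperp C hk hkn h hH hdperp I hI
    have step1 : ∑ β ∈ Bs, (∏ j ∈ I, F j (ℓ j) (yv β j))^2
        ≤ ∑ γ : {j // j ∈ I} → K, ∏ j : {j // j ∈ I}, (F j.val (ℓ j.val) (γ j))^2 := by
      have e1 : ∀ β : Fin (n - k) → K, (∏ j ∈ I, F j (ℓ j) (yv β j))^2
          = (fun γ : {j // j ∈ I} → K => ∏ j : {j // j ∈ I}, (F j.val (ℓ j.val) (γ j))^2)
              (fun j : {j // j ∈ I} => yv β j.val) := by
        intro β
        simp only
        rw [← Finset.prod_pow, ← Finset.prod_coe_sort I (fun j => (F j (ℓ j) (yv β j))^2)]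
      rw [Finset.sum_congr rfl fun β _ => e1 β]
      exact sum_comp_inj_le Bs _ hinj
        (fun γ : {j // j ∈ I} → K => ∏ j : {j // j ∈ I}, (F j.val (ℓ j.val) (γ j))^2)
        (fun γ => Finset.prod_nonneg fun j _ => sq_nonneg _)
    refine le_trans step1 (le_of_eq ?_)
    rw [fubG (ι := {j // j ∈ I}) (X := K) (M := ℝ) (fun j α => (F j.val (ℓ j.val) α)^2)]
    rw [← Finset.prod_coe_sort I (fun j => ((a j (ℓ j)).card / (Fintype.card K : ℝ)))]
    exact Finset.prod_congr rfl fun j _ => parseval _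
  -- Cauchy-Schwarz step
  have CSstep : ∀ ℓ : Fin n → (Fin μ → ZMod 2),
      ∑ β ∈ Bs, (∏ j ∈ I₁, F j (ℓ j) (yv β j)) * (∏ j ∈ I₂, F j (ℓ j) (yv β j))
        ≤ (∏ j ∈ I₁, Real.sqrt ((a j (ℓ j)).card / (Fintype.card K : ℝ)))
          * (∏ j ∈ I₂, Real.sqrt ((a j (ℓ j)).card / (Fintype.card K : ℝ))) := by
    intro ℓ
    have hcnn : ∀ (I : Finset (Fin n)) (j : Fin n),
        (0:ℝ) ≤ (a j (ℓ j)).card / (Fintype.card K : ℝ) := fun I j => by positivity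
    have cs := Finset.sum_mul_sq_le_sq_mul_sq Bs
      (fun β => ∏ j ∈ I₁, F j (ℓ j) (yv β j)) (fun β => ∏ j ∈ I₂, F j (ℓ j) (yv β j))
    have h1 := parsebound I₁ hI₁ ℓ
    have h2 := parsebound I₂ hI₂ ℓ
    have key : (∑ β ∈ Bs, (∏ j ∈ I₁, F j (ℓ j) (yv β j)) * (∏ j ∈ I₂, F j (ℓ j) (yv β j)))^2
        ≤ (∏ j ∈ I₁, ((a j (ℓ j)).card / (Fintype.card K : ℝ)))
          * (∏ j ∈ I₂, ((a j (ℓ j)).card / (Fintype.card K : ℝ))) := by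
      refine le_trans cs (mul_le_mul h1 h2 ?_ ?_)
      · exact Finset.sum_nonneg fun β _ => sq_nonneg _
      · exact Finset.prod_nonneg fun j _ => hcnn I₁ j
    have hsumnn : 0 ≤ ∑ β ∈ Bs, (∏ j ∈ I₁, F j (ℓ j) (yv β j)) * (∏ j ∈ I₂, F j (ℓ j) (yv β j)) :=
      Finset.sum_nonneg fun β _ => mul_nonneg (Finset.prod_nonneg fun j _ => hFnn _ _ _)
        (Finset.prod_nonneg fun j _ => hFnn _ _ _)
    have step := Real.le_sqrt_of_sq_le key
    refine le_trans step (le_of_eq ?_)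
    rw [Real.sqrt_mul (Finset.prod_nonneg fun j _ => hcnn I₁ j),
      sqrt_prod I₁ _ (fun j _ => hcnn I₁ j), sqrt_prod I₂ _ (fun j _ => hcnn I₂ j)]
  -- row sums
  have sqrtbound : ∀ j, ∑ v : (Fin μ → ZMod 2), Real.sqrt ((a j v).card / (Fintype.card K : ℝ))
      ≤ Real.sqrt (2 ^ μ) := by
    intro j
    have rowsum : ∑ v : (Fin μ → ZMod 2), ((a j v).card : ℝ) = (Fintype.card K : ℝ) := by
      have := Finset.card_eq_sum_card_fiberwise
        (f := fun u : K => τ j u) (s := Finset.univ) (t := Finset.univ)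
        (fun u _ => Finset.mem_univ _)
      rw [Finset.card_univ] at this
      have h1 : ∑ v : (Fin μ → ZMod 2), (a j v).card = Fintype.card K := this.symm
      rw [← Nat.cast_sum]
      exact_mod_cast congrArg (Nat.cast : ℕ → ℝ) h1
    have hVcard : (Fintype.card (Fin μ → ZMod 2) : ℝ) = 2 ^ μ := by
      rw [Fintype.card_fun, ZMod.card, Fintype.card_fin]
      push_cast
      ring
    have hnn : ∀ v : (Fin μ → ZMod 2), (0:ℝ) ≤ Real.sqrt ((a j v).card / (Fintype.card K : ℝ)) :=
      fun v => Real.sqrt_nonneg _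
    have cs := Finset.sum_mul_sq_le_sq_mul_sq (Finset.univ : Finset (Fin μ → ZMod 2))
      (fun _ => (1:ℝ)) (fun v => Real.sqrt ((a j v).card / (Fintype.card K : ℝ)))
    simp only [one_mul, one_pow] at cs
    have hsq : ∀ v : (Fin μ → ZMod 2), (Real.sqrt ((a j v).card / (Fintype.card K : ℝ)))^2
        = (a j v).card / (Fintype.card K : ℝ) := fun v => Real.sq_sqrt (by positivity)
    rw [Finset.sum_congr rfl fun v _ => hsq v, Finset.sum_const, Finset.card_univ,
      nsmul_eq_mul, mul_one] at cs
    have hsum1 : ∑ v : (Fin μ → ZMod 2), ((a j v).card / (Fintype.card K : ℝ)) = 1 := by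
      rw [← Finset.sum_div, rowsum, div_self (ne_of_gt hq0)]
    rw [hsum1, mul_one, hVcard] at cs
    exact Real.le_sqrt_of_sq_le cs
  -- fiber product identity
  have fiberprod : ∀ ℓ₃ : {j // j ∈ I₃} → (Fin μ → ZMod 2),
      ∑ ℓ ∈ Finset.univ.filter (fun ℓ : Fin n → (Fin μ → ZMod 2) => (fun j : {j // j ∈ I₃} => ℓ j.val) = ℓ₃),
        (∏ j ∈ I₁, Real.sqrt ((a j (ℓ j)).card / (Fintype.card K : ℝ)))
          * (∏ j ∈ I₂, Real.sqrt ((a j (ℓ j)).card / (Fintype.card K : ℝ)))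
      = (∏ j ∈ I₁, ∑ v : (Fin μ → ZMod 2), Real.sqrt ((a j v).card / (Fintype.card K : ℝ)))
          * (∏ j ∈ I₂, ∑ v : (Fin μ → ZMod 2), Real.sqrt ((a j v).card / (Fintype.card K : ℝ))) := by
    intro ℓ₃
    set r : Fin n → (Fin μ → ZMod 2) → ℝ := fun j v => Real.sqrt ((a j v).card / (Fintype.card K : ℝ))
      with hrdef
    set c : Fin n → (Fin μ → ZMod 2) → ℝ := fun j v =>
      if j ∈ I₁ ∨ j ∈ I₂ then r j v else if (∀ hj : j ∈ I₃, v = ℓ₃ ⟨j, hj⟩) then 1 else 0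
      with hcdef
    have hI₃mem : ∀ j, j ∈ I₃ → (j ∉ I₁ ∧ j ∉ I₂) := fun j hj =>
      ⟨fun h1 => (Finset.disjoint_left.mp h13) h1 hj,
       fun h2 => (Finset.disjoint_left.mp h23) h2 hj⟩
    have hUdisj : Disjoint (I₁ ∪ I₂) I₃ := Finset.disjoint_union_left.mpr ⟨h13, h23⟩
    have hsplit : ∀ w : Fin n → ℝ, ∏ j : Fin n, w j
        = ((∏ j ∈ I₁, w j) * (∏ j ∈ I₂, w j)) * (∏ j ∈ I₃, w j) := by
      intro w
      rw [show (Finset.univ : Finset (Fin n)) = I₁ ∪ I₂ ∪ I₃ from hcover.symm,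
        Finset.prod_union hUdisj, Finset.prod_union h12]
    have perl : ∀ ℓ : Fin n → (Fin μ → ZMod 2),
        (if (fun j : {j // j ∈ I₃} => ℓ j.val) = ℓ₃ then
          (∏ j ∈ I₁, r j (ℓ j)) * (∏ j ∈ I₂, r j (ℓ j)) else 0)
        = ∏ j : Fin n, c j (ℓ j) := by
      intro ℓ
      have e1 : ∏ j ∈ I₁, c j (ℓ j) = ∏ j ∈ I₁, r j (ℓ j) :=
        Finset.prod_congr rfl fun j hj => by
          simp only [hcdef]; rw [if_pos (Or.inl hj)]
      have e2 : ∏ j ∈ I₂, c j (ℓ j) = ∏ j ∈ I₂, r j (ℓ j) :=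
        Finset.prod_congr rfl fun j hj => by
          simp only [hcdef]; rw [if_pos (Or.inr hj)]
      have e3 : ∏ j ∈ I₃, c j (ℓ j)
          = if (fun j : {j // j ∈ I₃} => ℓ j.val) = ℓ₃ then (1:ℝ) else 0 := by
        have estep : ∀ j ∈ I₃, c j (ℓ j)
            = if (∀ hj : j ∈ I₃, ℓ j = ℓ₃ ⟨j, hj⟩) then (1:ℝ) else 0 := by
          intro j hj
          simp only [hcdef]
          rw [if_neg (by push_neg; exact hI₃mem j hj)]
        rw [Finset.prod_congr rfl estep, Finset.prod_boole]
        have hiff : (∀ j ∈ I₃, ∀ (hj : j ∈ I₃), ℓ j = ℓ₃ ⟨j, hj⟩)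
            ↔ ((fun j : {j // j ∈ I₃} => ℓ j.val) = ℓ₃) := by
          rw [funext_iff]
          constructor
          · intro H jj; exact H jj.val jj.prop jj.prop
          · intro H j _ hj'; exact H ⟨j, hj'⟩
        simp only [hiff]
      rw [hsplit (fun j => c j (ℓ j)), e1, e2, e3]
      by_cases hc : (fun j : {j // j ∈ I₃} => ℓ j.val) = ℓ₃ <;> simp [hc]
    calc ∑ ℓ ∈ Finset.univ.filter
          (fun ℓ : Fin n → (Fin μ → ZMod 2) => (fun j : {j // j ∈ I₃} => ℓ j.val) = ℓ₃),
          (∏ j ∈ I₁, r j (ℓ j)) * (∏ j ∈ I₂, r j (ℓ j))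
        = ∑ ℓ : Fin n → (Fin μ → ZMod 2), (if (fun j : {j // j ∈ I₃} => ℓ j.val) = ℓ₃ then
            (∏ j ∈ I₁, r j (ℓ j)) * (∏ j ∈ I₂, r j (ℓ j)) else 0) :=
          Finset.sum_filter _ _
      _ = ∑ ℓ : Fin n → (Fin μ → ZMod 2), ∏ j : Fin n, c j (ℓ j) :=
          Finset.sum_congr rfl fun ℓ _ => perl ℓ
      _ = ∏ j : Fin n, ∑ v : (Fin μ → ZMod 2), c j v := fubG c
      _ = (∏ j ∈ I₁, ∑ v : (Fin μ → ZMod 2), r j v) * (∏ j ∈ I₂, ∑ v : (Fin μ → ZMod 2), r j v) := by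
          rw [hsplit (fun j => ∑ v : (Fin μ → ZMod 2), c j v)]
          have f1 : ∏ j ∈ I₁, ∑ v : (Fin μ → ZMod 2), c j v = ∏ j ∈ I₁, ∑ v : (Fin μ → ZMod 2), r j v :=
            Finset.prod_congr rfl fun j hj => Finset.sum_congr rfl fun v _ => by
              simp only [hcdef]; rw [if_pos (Or.inl hj)]
          have f2 : ∏ j ∈ I₂, ∑ v : (Fin μ → ZMod 2), c j v = ∏ j ∈ I₂, ∑ v : (Fin μ → ZMod 2), r j v :=
            Finset.prod_congr rfl fun j hj => Finset.sum_congr rfl fun v _ => by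
              simp only [hcdef]; rw [if_pos (Or.inr hj)]
          have f3 : ∏ j ∈ I₃, ∑ v : (Fin μ → ZMod 2), c j v = 1 := by
            refine Finset.prod_eq_one fun j hj => ?_
            have hv : ∀ v : (Fin μ → ZMod 2), c j v = if v = ℓ₃ ⟨j, hj⟩ then (1:ℝ) else 0 := by
              intro v
              simp only [hcdef]
              rw [if_neg (by push_neg; exact hI₃mem j hj)]
              refine if_congr ⟨fun H => H hj, fun H hj' => H⟩ rfl rfl
            rw [Finset.sum_congr rfl fun v _ => hv v,
              Finset.sum_ite_eq' Finset.univ (ℓ₃ ⟨j, hj⟩) (fun _ => (1:ℝ)),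
              if_pos (Finset.mem_univ _)]
          rw [f1, f2, f3, mul_one]
  -- KB bound
  have KB : ∀ ℓ₃ : {j // j ∈ I₃} → (Fin μ → ZMod 2),
      ∑ ℓ ∈ Finset.univ.filter (fun ℓ : Fin n → (Fin μ → ZMod 2) => (fun j : {j // j ∈ I₃} => ℓ j.val) = ℓ₃),
        ∑ β ∈ Bs, (∏ j ∈ I₁, F j (ℓ j) (yv β j)) * (∏ j ∈ I₂, F j (ℓ j) (yv β j))
      ≤ (2:ℝ) ^ (μ * (n - dperp + 1)) := by
    intro ℓ₃
    have hrnn : ∀ j v, (0:ℝ) ≤ Real.sqrt ((a j v).card / (Fintype.card K : ℝ)) :=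
      fun j v => Real.sqrt_nonneg _
    calc ∑ ℓ ∈ Finset.univ.filter
          (fun ℓ : Fin n → (Fin μ → ZMod 2) => (fun j : {j // j ∈ I₃} => ℓ j.val) = ℓ₃),
          ∑ β ∈ Bs, (∏ j ∈ I₁, F j (ℓ j) (yv β j)) * (∏ j ∈ I₂, F j (ℓ j) (yv β j))
        ≤ ∑ ℓ ∈ Finset.univ.filter
            (fun ℓ : Fin n → (Fin μ → ZMod 2) => (fun j : {j // j ∈ I₃} => ℓ j.val) = ℓ₃),
            (∏ j ∈ I₁, Real.sqrt ((a j (ℓ j)).card / (Fintype.card K : ℝ)))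
              * (∏ j ∈ I₂, Real.sqrt ((a j (ℓ j)).card / (Fintype.card K : ℝ))) :=
          Finset.sum_le_sum fun ℓ _ => CSstep ℓ
      _ = (∏ j ∈ I₁, ∑ v : (Fin μ → ZMod 2), Real.sqrt ((a j v).card / (Fintype.card K : ℝ)))
            * (∏ j ∈ I₂, ∑ v : (Fin μ → ZMod 2), Real.sqrt ((a j v).card / (Fintype.card K : ℝ))) :=
          fiberprod ℓ₃
      _ ≤ (∏ _j ∈ I₁, Real.sqrt ((2:ℝ)^μ)) * (∏ _j ∈ I₂, Real.sqrt ((2:ℝ)^μ)) := by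
          refine mul_le_mul ?_ ?_ ?_ ?_
          · exact Finset.prod_le_prod
              (fun j _ => Finset.sum_nonneg fun v _ => hrnn j v) (fun j _ => sqrtbound j)
          · exact Finset.prod_le_prod
              (fun j _ => Finset.sum_nonneg fun v _ => hrnn j v) (fun j _ => sqrtbound j)
          · exact Finset.prod_nonneg fun j _ => Finset.sum_nonneg fun v _ => hrnn j v
          · exact Finset.prod_nonneg fun j _ => Real.sqrt_nonneg _
      _ = (2:ℝ) ^ (μ * (n - dperp + 1)) := by
          rw [Finset.prod_const, Finset.prod_const, hI₁, hI₂, ← mul_pow,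
            Real.mul_self_sqrt (by positivity), ← pow_mul]
  -- final chain
  have main : ∑ ℓ : Fin n → (Fin μ → ZMod 2), |leakProb τ CF ℓ - leakProb τ Finset.univ ℓ|
      ≤ (2:ℝ) ^ (μ * (n - dperp + 1)) * ∑ ℓ₃ : {j // j ∈ I₃} → (Fin μ → ZMod 2), T ℓ₃ := by
    have hUdisj : Disjoint (I₁ ∪ I₂) I₃ := Finset.disjoint_union_left.mpr ⟨h13, h23⟩
    calc ∑ ℓ : Fin n → (Fin μ → ZMod 2), |leakProb τ CF ℓ - leakProb τ Finset.univ ℓ|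
        ≤ ∑ ℓ : Fin n → (Fin μ → ZMod 2), ∑ β ∈ Bs, ∏ j, F j (ℓ j) (yv β j) :=
          Finset.sum_le_sum fun ℓ _ => stepA ℓ
      _ ≤ ∑ ℓ : Fin n → (Fin μ → ZMod 2),
            (∑ β ∈ Bs, (∏ j ∈ I₁, F j (ℓ j) (yv β j)) * (∏ j ∈ I₂, F j (ℓ j) (yv β j)))
              * T (fun j : {j // j ∈ I₃} => ℓ j.val) := by
          refine Finset.sum_le_sum fun ℓ _ => ?_
          rw [Finset.sum_mul]
          refine Finset.sum_le_sum fun β hβ => ?_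
          have hβ0 : β ≠ 0 := (Finset.mem_filter.mp hβ).2
          have hsplit : ∏ j, F j (ℓ j) (yv β j)
              = ((∏ j ∈ I₁, F j (ℓ j) (yv β j)) * (∏ j ∈ I₂, F j (ℓ j) (yv β j)))
                  * (∏ j ∈ I₃, F j (ℓ j) (yv β j)) := by
            rw [show (Finset.univ : Finset (Fin n)) = I₁ ∪ I₂ ∪ I₃ from hcover.symm,
              Finset.prod_union hUdisj, Finset.prod_union h12]
          rw [hsplit]
          exact mul_le_mul_of_nonneg_left (hTle ℓ β hβ0)
            (mul_nonneg (Finset.prod_nonneg fun j _ => hFnn _ _ _)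
              (Finset.prod_nonneg fun j _ => hFnn _ _ _))
      _ = ∑ ℓ₃ : {j // j ∈ I₃} → (Fin μ → ZMod 2), ∑ ℓ ∈ Finset.univ.filter
            (fun ℓ : Fin n → (Fin μ → ZMod 2) => (fun j : {j // j ∈ I₃} => ℓ j.val) = ℓ₃),
            (∑ β ∈ Bs, (∏ j ∈ I₁, F j (ℓ j) (yv β j)) * (∏ j ∈ I₂, F j (ℓ j) (yv β j)))
              * T (fun j : {j // j ∈ I₃} => ℓ j.val) :=
          (Finset.sum_fiberwise Finset.univ (fun ℓ : Fin n → (Fin μ → ZMod 2) =>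
            (fun j : {j // j ∈ I₃} => ℓ j.val)) _).symm
      _ = ∑ ℓ₃ : {j // j ∈ I₃} → (Fin μ → ZMod 2), (∑ ℓ ∈ Finset.univ.filter
            (fun ℓ : Fin n → (Fin μ → ZMod 2) => (fun j : {j // j ∈ I₃} => ℓ j.val) = ℓ₃),
            ∑ β ∈ Bs, (∏ j ∈ I₁, F j (ℓ j) (yv β j)) * (∏ j ∈ I₂, F j (ℓ j) (yv β j)))
              * T ℓ₃ := by
          refine Finset.sum_congr rfl fun ℓ₃ _ => ?_
          rw [Finset.sum_mul]
          refine Finset.sum_congr rfl fun ℓ hℓ => ?_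
          rw [(Finset.mem_filter.mp hℓ).2]
      _ ≤ ∑ ℓ₃ : {j // j ∈ I₃} → (Fin μ → ZMod 2), (2:ℝ) ^ (μ * (n - dperp + 1)) * T ℓ₃ :=
          Finset.sum_le_sum fun ℓ₃ _ =>
            mul_le_mul_of_nonneg_right (KB ℓ₃) (hT0 ℓ₃)
      _ = (2:ℝ) ^ (μ * (n - dperp + 1)) * ∑ ℓ₃ : {j // j ∈ I₃} → (Fin μ → ZMod 2), T ℓ₃ := by
          rw [Finset.mul_sum]
  calc (1 / 2 : ℝ) * ∑ ℓ : Fin n → (Fin μ → ZMod 2), |leakProb τ CF ℓ - leakProb τ Finset.univ ℓ|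
      ≤ (1 / 2 : ℝ) * ((2:ℝ) ^ (μ * (n - dperp + 1)) * ∑ ℓ₃ : {j // j ∈ I₃} → (Fin μ → ZMod 2), T ℓ₃) :=
        mul_le_mul_of_nonneg_left main (by norm_num)
    _ = (1 / 2 : ℝ) * (2 : ℝ) ^ (μ * (n - dperp + 1)) * ∑ ℓ₃ : {j // j ∈ I₃} → (Fin μ → ZMod 2), T ℓ₃ := by
        ring
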